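/- For even d with 2d ≥ n ≥ d ≥ 2, P(n, d) · V(n+1, d/2) ≤ (n+1)!, i.e., P(n, d) ≤ (n+1)! / V(n+1, d/2). -/
import Mathlib


/-- The Chebyshev distance between two permutations of `{1,…,n}`
(represented as permutations of `Fin n`): `max_i |σ(i) − τ(i)|`. -/
def permDist {n : ℕ} (σ τ : Equiv.Perm (Fin n)) : ℕ :=
  Finset.univ.sup fun i => Nat.dist (σ i : ℕ) (τ i : ℕ)

/-- `P n d` is the maximum cardinality of a set of permutations of `{1,…,n}`
whose pairwise Chebyshev distance is at least `d`. -/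
noncomputable def P (n d : ℕ) : ℕ :=
  sSup {k | ∃ A : Finset (Equiv.Perm (Fin n)),
    (∀ σ ∈ A, ∀ τ ∈ A, σ ≠ τ → d ≤ permDist σ τ) ∧ A.card = k}


/-- `V n d` is the number of permutations `π` of `{1,…,n}` with `|π(i) − i| ≤ d`
for all `i`. -/
def V (n d : ℕ) : ℕ :=
  (Finset.univ.filter fun π : Equiv.Perm (Fin n) =>
    ∀ i : Fin n, Nat.dist (π i : ℕ) (i : ℕ) ≤ d).card

section Star

variable {n d : ℕ}

/-- Extend `σ : Perm (Fin n)` to `Perm (Fin (n+1))` by inserting the value `d`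
at the new last position (values `≥ d` are shifted up by one). -/
def starF (d : ℕ) {n : ℕ} (hd : d ≤ n) (σ : Equiv.Perm (Fin n)) :
    Fin (n + 1) → Fin (n + 1) := fun j =>
  if h : (j : ℕ) < n then
    (if (σ ⟨j, h⟩ : ℕ) < d then (σ ⟨j, h⟩).castSucc else (σ ⟨j, h⟩).succ)
  else ⟨d, by omega⟩

lemma starF_val (hd : d ≤ n) (σ : Equiv.Perm (Fin n)) (j : Fin (n + 1)) :
    (starF d hd σ j : ℕ) =
      if h : (j : ℕ) < n then
        (if (σ ⟨j, h⟩ : ℕ) < d then (σ ⟨j, h⟩ : ℕ) else (σ ⟨j, h⟩ : ℕ) + 1)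
      else d := by
  unfold starF
  split
  · split <;> simp
  · rfl

lemma starF_inj (hd : d ≤ n) (σ : Equiv.Perm (Fin n)) :
    Function.Injective (starF d hd σ) := by
  intro a b hab
  have h := congrArg Fin.val hab
  rw [starF_val, starF_val] at h
  by_cases ha : (a : ℕ) < n <;> by_cases hb : (b : ℕ) < n
  · rw [dif_pos ha, dif_pos hb] at h
    have hv : (σ ⟨a, ha⟩ : ℕ) = (σ ⟨b, hb⟩ : ℕ) := by
      split_ifs at h <;> omega
    have h2 : σ ⟨a, ha⟩ = σ ⟨b, hb⟩ := Fin.ext hv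
    have h3 := σ.injective h2
    simp only [Fin.mk.injEq] at h3
    exact Fin.ext h3
  · exfalso
    rw [dif_pos ha, dif_neg hb] at h
    split_ifs at h <;> omega
  · exfalso
    rw [dif_neg ha, dif_pos hb] at h
    split_ifs at h <;> omega
  · have h1 := a.isLt
    have h2 := b.isLt
    exact Fin.ext (by omega)

/-- The extended permutation. -/
noncomputable def star (hd : d ≤ n) (σ : Equiv.Perm (Fin n)) :
    Equiv.Perm (Fin (n + 1)) :=
  Equiv.ofBijective _ (Finite.injective_iff_bijective.mp (starF_inj hd σ))

lemma star_apply (hd : d ≤ n) (σ : Equiv.Perm (Fin n)) (j : Fin (n + 1)) :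
    star hd σ j = starF d hd σ j := rfl

/-- Key lemma: extension increases the minimum distance from `d` to `d+1`
(this uses `n ≤ 2d`). -/
lemma star_dist (hd0 : 0 < d) (hdn : d ≤ n) (hn2d : n ≤ 2 * d)
    (σ τ : Equiv.Perm (Fin n)) (h : d ≤ permDist σ τ) :
    ∃ j : Fin (n + 1),
      d + 1 ≤ Nat.dist (star hdn σ j : ℕ) (star hdn τ j : ℕ) := by
  rw [permDist, Finset.le_sup_iff (by simpa using hd0)] at h
  obtain ⟨i, -, hi⟩ := h
  refine ⟨i.castSucc, ?_⟩
  have hlt : ((i.castSucc : Fin (n + 1)) : ℕ) < n := by simp [i.isLt]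
  have key : ∀ ρ : Equiv.Perm (Fin n),
      (star hdn ρ i.castSucc : ℕ) =
        if (ρ i : ℕ) < d then (ρ i : ℕ) else (ρ i : ℕ) + 1 := by
    intro ρ
    rw [star_apply, starF_val hdn ρ i.castSucc, dif_pos hlt]
    have : (⟨((i.castSucc : Fin (n + 1)) : ℕ), hlt⟩ : Fin n) = i := by
      ext; simp
    rw [this]
  rw [key σ, key τ]
  have hx := (σ i).isLt
  have hy := (τ i).isLt
  simp only [Nat.dist] at hi ⊢
  split_ifs <;> omega

/-- Right-invariance: a Chebyshev ball of radius `e` around any permutation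
has the same cardinality as the one around the identity, namely `V (n+1) e`. -/
lemma ball_card (ρ : Equiv.Perm (Fin (n + 1))) (e : ℕ) :
    (Finset.univ.filter fun π : Equiv.Perm (Fin (n + 1)) =>
      ∀ i, Nat.dist (π i : ℕ) (ρ i : ℕ) ≤ e).card = V (n + 1) e := by
  rw [V]
  apply Finset.card_bij' (fun π _ => π * ρ⁻¹) (fun π _ => π * ρ)
  · intro π hπ
    simp only [Finset.mem_filter, Finset.mem_univ, true_and] at hπ ⊢
    intro i
    have := hπ (ρ⁻¹ i)
    simpa [Equiv.Perm.mul_apply] using this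
  · intro π hπ
    simp only [Finset.mem_filter, Finset.mem_univ, true_and] at hπ ⊢
    intro i
    have := hπ (ρ i)
    simpa [Equiv.Perm.mul_apply] using this
  · intro π _
    exact inv_mul_cancel_right π ρ
  · intro π _
    exact mul_inv_cancel_right π ρ

end Star

/-- For even `d` with `2d ≥ n ≥ d ≥ 2`, `P(n, d) · V(n+1, d/2) ≤ (n+1)!`. -/
theorem stmt11 (n d : ℕ) (heven : Even d) (hd : 2 ≤ d) (hnd : d ≤ n)
    (hn : n ≤ 2 * d) :
    P n d * V (n + 1) (d / 2) ≤ Nat.factorial (n + 1) := by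
  classical
  obtain ⟨e, he⟩ := heven
  have hde : d / 2 = e := by omega
  have hP : P n d ∈ {k | ∃ A : Finset (Equiv.Perm (Fin n)),
      (∀ σ ∈ A, ∀ τ ∈ A, σ ≠ τ → d ≤ permDist σ τ) ∧ A.card = k} := by
    apply Nat.sSup_mem
    · exact ⟨0, ∅, by simp, by simp⟩
    · refine ⟨Fintype.card (Equiv.Perm (Fin n)), ?_⟩
      rintro k ⟨A, -, rfl⟩
      simpa using Finset.card_le_univ A
  obtain ⟨A, hA, hcard⟩ := hP
  rw [← hcard, hde]
  -- sphere packing in `Perm (Fin (n+1))`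
  set B : Equiv.Perm (Fin n) → Finset (Equiv.Perm (Fin (n + 1))) :=
    fun σ => Finset.univ.filter fun π =>
      ∀ i, Nat.dist (π i : ℕ) (star hnd σ i : ℕ) ≤ e with hB
  have hdisj : ∀ σ ∈ A, ∀ τ ∈ A, σ ≠ τ → Disjoint (B σ) (B τ) := by
    intro σ hσ τ hτ hne
    rw [Finset.disjoint_left]
    intro π hπσ hπτ
    obtain ⟨j, hj⟩ := star_dist (by omega) hnd hn σ τ (hA σ hσ τ hτ hne)
    simp only [hB, Finset.mem_filter, Finset.mem_univ, true_and] at hπσ hπτ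
    have h1 := hπσ j
    have h2 := hπτ j
    simp only [Nat.dist] at hj h1 h2
    omega
  have hcount : (A.biUnion B).card = A.card * V (n + 1) e := by
    rw [Finset.card_biUnion hdisj]
    rw [Finset.sum_congr rfl (fun σ _ => ball_card (star hnd σ) e)]
    simp [mul_comm]
  calc A.card * V (n + 1) e = (A.biUnion B).card := hcount.symm
    _ ≤ Fintype.card (Equiv.Perm (Fin (n + 1))) := by
        simpa using Finset.card_le_univ _
    _ = Nat.factorial (n + 1) := by simp [Fintype.card_perm]
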